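/- Given a feasible solution S (a set of stabs, each blob containing at least one stab) to the stab placement problem on the blobs of a cloud C, one can construct a feasible hub placement on the same blobs using at most 2|S| − 1 hubs. -/

import Mathlib

noncomputable section

abbrev Plane := EuclideanSpace ℝ (Fin 2)

/-- The unit-distance graph on the sensors: blobs are its connected components. -/
def unitGraph (V : Finset Plane) : SimpleGraph V where
  Adj u v := u ≠ v ∧ dist (u : Plane) (v : Plane) ≤ 1
  symm := by
    constructor
    intro u v h
    exact ⟨h.1.symm, by rw [dist_comm]; exact h.2⟩
  loopless := by constructor; intro v h; exact h.1 rfl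

/-- The distance-2 graph on the sensors: clouds are its connected components. -/
def twoGraph (V : Finset Plane) : SimpleGraph V where
  Adj u v := u ≠ v ∧ dist (u : Plane) (v : Plane) ≤ 2
  symm := by
    constructor
    intro u v h
    exact ⟨h.1.symm, by rw [dist_comm]; exact h.2⟩
  loopless := by constructor; intro v h; exact h.1 rfl

/-- Position of a device (sensor or hub). -/
def devPos (V H : Finset Plane) : (V ⊕ H : Type) → Plane :=
  Sum.elim (fun v => (v : Plane)) (fun h => (h : Plane))

/-- Communication graph on sensors `V` and hubs `H`: edges between devices at distance
at most 1, except that there are no hub–hub edges. -/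
def hubGraph (V H : Finset Plane) : SimpleGraph (V ⊕ H : Type) where
  Adj a b := a ≠ b ∧ dist (devPos V H a) (devPos V H b) ≤ 1 ∧ ¬ (a.isRight ∧ b.isRight)
  symm := by
    constructor
    intro a b h
    refine ⟨h.1.symm, by rw [dist_comm]; exact h.2.1, ?_⟩
    intro hc
    exact h.2.2 ⟨hc.2, hc.1⟩
  loopless := by constructor; intro a h; exact h.1 rfl

namespace StabToHubAux

local instance : DecidableEq Plane := Classical.decEq _

/-- The setoid on sensors: related iff reachable in the hub graph. -/
def sensRel (V H : Finset Plane) : Setoid (V : Type) where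
  r v w := (hubGraph V H).Reachable (.inl v) (.inl w)
  iseqv := ⟨fun _ => SimpleGraph.Reachable.refl _,
    SimpleGraph.Reachable.symm, SimpleGraph.Reachable.trans⟩

instance (V H : Finset Plane) : Finite (Quotient (sensRel V H)) :=
  Quotient.finite _

/-- Number of sensor classes. -/
def nclass (V H : Finset Plane) : ℕ := Nat.card (Quotient (sensRel V H))

lemma nclass_pos (V H : Finset Plane) (hV : V.Nonempty) : 1 ≤ nclass V H := by
  obtain ⟨v, hv⟩ := hV
  have : Nonempty (Quotient (sensRel V H)) := ⟨Quotient.mk _ ⟨v, hv⟩⟩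
  exact Nat.card_pos

/-- Enlarging the hub set gives a graph homomorphism. -/
def extendHom (V : Finset Plane) {H H' : Finset Plane} (hsub : H ⊆ H') :
    hubGraph V H →g hubGraph V H' where
  toFun := Sum.map id (fun h => ⟨h.1, hsub h.2⟩)
  map_rel' := by
    rintro (v | h) (w | g) ⟨hne, hd, hr⟩
    · exact ⟨by simpa using (by simpa using hne : v ≠ w), by simpa [devPos] using hd, by simp⟩
    · exact ⟨by simp, by simpa [devPos] using hd, by simp⟩
    · exact ⟨by simp, by simpa [devPos] using hd, by simp⟩
    · exact absurd ⟨rfl, rfl⟩ hr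

lemma reach_mono (V : Finset Plane) {H H' : Finset Plane} (hsub : H ⊆ H') {v w : (V : Type)}
    (h : (hubGraph V H).Reachable (.inl v) (.inl w)) :
    (hubGraph V H').Reachable (.inl v) (.inl w) := by
  have := h.map (extendHom V hsub)
  simpa [extendHom] using this

/-- Sensor inclusion into the hub graph. -/
def inlHom (V H : Finset Plane) : unitGraph V →g hubGraph V H where
  toFun := Sum.inl
  map_rel' := by
    rintro v w ⟨hne, hd⟩
    exact ⟨by simpa using hne, by simpa [devPos] using hd, by simp⟩

/-- Two sensors within distance 1 of a common hub are connected. -/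
lemma reach_via_hub (V H : Finset Plane) {a b : (V : Type)} {m : Plane} (hm : m ∈ H)
    (ha : dist (a : Plane) m ≤ 1) (hb : dist (b : Plane) m ≤ 1) :
    (hubGraph V H).Reachable (.inl a) (.inl b) := by
  have h1 : (hubGraph V H).Adj (.inl a) (.inr ⟨m, hm⟩) :=
    ⟨by simp, by simpa [devPos] using ha, by simp⟩
  have h2 : (hubGraph V H).Adj (.inr ⟨m, hm⟩) (.inl b) :=
    ⟨by simp, by simpa [devPos, dist_comm] using hb, by simp⟩
  exact h1.reachable.trans h2.reachable

lemma nclass_lt (V H : Finset Plane) {a b : (V : Type)} {m : Plane}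
    (hnr : ¬ (hubGraph V H).Reachable (.inl a) (.inl b))
    (hr' : (hubGraph V (insert m H)).Reachable (.inl a) (.inl b)) :
    nclass V (insert m H) < nclass V H := by
  classical
  letI : Fintype (Quotient (sensRel V H)) := Fintype.ofFinite _
  letI : Fintype (Quotient (sensRel V (insert m H))) := Fintype.ofFinite _
  rw [nclass, nclass, Nat.card_eq_fintype_card, Nat.card_eq_fintype_card]
  refine Fintype.card_lt_of_surjective_not_injective
    (Quotient.map id (fun x y hxy => reach_mono V (Finset.subset_insert m H) hxy)) ?_ ?_
  · intro q
    obtain ⟨v, rfl⟩ := Quotient.exists_rep q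
    exact ⟨Quotient.mk _ v, rfl⟩
  · intro hinj
    have heq : (Quotient.mk (sensRel V H) a) = Quotient.mk _ b := by
      apply hinj
      exact Quotient.sound hr'
    exact hnr (Quotient.exact heq)

/-- If sensors are not all connected, some distance-2 pair is disconnected. -/
lemma cross (V H : Finset Plane) {u v : (V : Type)} (p : (twoGraph V).Walk u v)
    (h : ¬ (hubGraph V H).Reachable (.inl u) (.inl v)) :
    ∃ a b : (V : Type), dist (a : Plane) (b : Plane) ≤ 2 ∧
      ¬ (hubGraph V H).Reachable (.inl a) (.inl b) := by
  induction p with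
  | nil => exact absurd (SimpleGraph.Reachable.refl _) h
  | @cons u w v hadj p ih =>
    by_cases hc : (hubGraph V H).Reachable (.inl u) (.inl w)
    · exact ih (fun hwv => h (hc.trans hwv))
    · exact ⟨u, w, hadj.2, hc⟩

lemma reach_sensor (V H : Finset Plane)
    (hH : ∀ h ∈ H, ∃ v ∈ V, dist h v ≤ 1) (a : (V ⊕ H : Type)) :
    ∃ v : (V : Type), (hubGraph V H).Reachable a (.inl v) := by
  cases a with
  | inl v => exact ⟨v, SimpleGraph.Reachable.refl _⟩
  | inr h =>
    obtain ⟨v, hv, hd⟩ := hH h.1 h.2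
    refine ⟨⟨v, hv⟩, SimpleGraph.Adj.reachable ?_⟩
    exact ⟨by simp, by simpa [devPos] using hd, by simp⟩

lemma connected_of_nclass_le_one (V H : Finset Plane) (hV : V.Nonempty)
    (hH : ∀ h ∈ H, ∃ v ∈ V, dist h v ≤ 1)
    (h1 : nclass V H ≤ 1) : (hubGraph V H).Connected := by
  obtain ⟨v0, hv0⟩ := hV
  have hne : Nonempty ((V ⊕ H : Type)) := ⟨.inl ⟨v0, hv0⟩⟩
  have hsub : Subsingleton (Quotient (sensRel V H)) :=
    Finite.card_le_one_iff_subsingleton.mp h1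
  rw [SimpleGraph.connected_iff]
  refine ⟨fun a b => ?_, hne⟩
  obtain ⟨va, hva⟩ := reach_sensor V H hH a
  obtain ⟨vb, hvb⟩ := reach_sensor V H hH b
  have : Quotient.mk (sensRel V H) va = Quotient.mk _ vb := Subsingleton.elim _ _
  exact (hva.trans (Quotient.exact this)).trans hvb.symm

lemma build (V : Finset Plane) (hV : V.Nonempty) (hcloud : (twoGraph V).Connected) :
    ∀ n (H : Finset Plane), nclass V H ≤ n →
      (∀ h ∈ H, ∃ v ∈ V, dist h v ≤ 1) →
      ∃ M : Finset Plane, H ⊆ M ∧ M.card + 1 ≤ H.card + nclass V H ∧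
        (hubGraph V M).Connected := by
  intro n
  induction n with
  | zero =>
    intro H hn _
    exact absurd (nclass_pos V H hV) (by omega)
  | succ n ih =>
    intro H hn hH
    by_cases h1 : nclass V H ≤ 1
    · refine ⟨H, Finset.Subset.refl H, ?_, connected_of_nclass_le_one V H hV hH h1⟩
      have := nclass_pos V H hV
      omega
    · have hnt : Nontrivial (Quotient (sensRel V H)) :=
        Finite.one_lt_card_iff_nontrivial.mp (show 1 < nclass V H by omega)
      obtain ⟨q1, q2, hq⟩ := hnt
      obtain ⟨x, rfl⟩ := Quotient.exists_rep q1
      obtain ⟨y, rfl⟩ := Quotient.exists_rep q2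
      have hnr : ¬ (hubGraph V H).Reachable (.inl x) (.inl y) :=
        fun hr => hq (Quotient.sound hr)
      obtain ⟨p⟩ := hcloud.preconnected x y
      obtain ⟨a, b, hd2, hab⟩ := cross V H p hnr
      set m : Plane := midpoint ℝ (a : Plane) (b : Plane) with hmdef
      have hma : dist (a : Plane) m ≤ 1 := by
        rw [hmdef, dist_left_midpoint (𝕜 := ℝ), Real.norm_two]
        linarith
      have hmb : dist (b : Plane) m ≤ 1 := by
        rw [hmdef, dist_right_midpoint (𝕜 := ℝ), Real.norm_two]
        linarith
      have hmH : m ∉ H := fun hmem => hab (reach_via_hub V H hmem hma hmb)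
      have hr' : (hubGraph V (insert m H)).Reachable (.inl a) (.inl b) :=
        reach_via_hub V (insert m H) (Finset.mem_insert_self m H) hma hmb
      have hlt : nclass V (insert m H) < nclass V H := nclass_lt V H hab hr'
      have hinv : ∀ h ∈ insert m H, ∃ v ∈ V, dist h v ≤ 1 := by
        intro h hh
        rcases Finset.mem_insert.mp hh with rfl | hh
        · exact ⟨a, a.2, by simpa [dist_comm] using hma⟩
        · exact hH h hh
      obtain ⟨M, hsubM, hcard, hconn⟩ := ih (insert m H) (by omega) hinv
      refine ⟨M, fun z hz => hsubM (Finset.mem_insert_of_mem hz), ?_, hconn⟩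
      rw [Finset.card_insert_of_notMem hmH] at hcard
      omega

end StabToHubAux

open StabToHubAux in
/-- Given a feasible stab placement `S` on the blobs of a cloud `V` (every blob contains
a stab), there is a feasible hub placement on the same blobs with at most `2|S| - 1` hubs. -/
theorem stab_to_hub (V S : Finset Plane) (hV : V.Nonempty)
    (hcloud : (twoGraph V).Connected)
    (hstab : ∀ v : V, ∃ s ∈ S, ∃ u : V, (unitGraph V).Reachable v u ∧ dist s (u : Plane) ≤ 1) :
    ∃ Hs : Finset Plane, Hs.card ≤ 2 * S.card - 1 ∧ (hubGraph V Hs).Connected := by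
  classical
  choose f hfS u hreach hdist using hstab
  set T : Finset Plane := V.attach.image f with hT
  have hmemT : ∀ v : (V : Type), f v ∈ T := fun v =>
    Finset.mem_image.mpr ⟨v, Finset.mem_attach _ _, rfl⟩
  have hTS : T ⊆ S := by
    intro t ht
    rw [hT, Finset.mem_image] at ht
    obtain ⟨v, _, rfl⟩ := ht
    exact hfS v
  have hinv : ∀ h ∈ T, ∃ v ∈ V, dist h v ≤ 1 := by
    intro h hh
    rw [hT, Finset.mem_image] at hh
    obtain ⟨v, _, rfl⟩ := hh
    exact ⟨u v, (u v).2, hdist v⟩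
  -- every sensor reaches the hub at its stab
  have hrelhub : ∀ v : (V : Type),
      (hubGraph V T).Reachable (.inl v) (.inr ⟨f v, hmemT v⟩) := by
    intro v
    have h1 : (hubGraph V T).Reachable (.inl v) (.inl (u v)) := by
      have := (hreach v).map (inlHom V T)
      simpa [inlHom] using this
    refine h1.trans (SimpleGraph.Adj.reachable ?_)
    exact ⟨by simp, by simpa [devPos, dist_comm] using hdist v, by simp⟩
  have hcT : nclass V T ≤ T.card := by
    have hinj : Function.Injective (fun q : Quotient (sensRel V T) =>
        (⟨f q.out, hmemT q.out⟩ : (T : Type))) := by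
      intro q q' h
      have heq : f q.out = f q'.out := congrArg Subtype.val h
      have h2 : (hubGraph V T).Reachable (.inl q'.out) (.inr ⟨f q.out, hmemT q.out⟩) := by
        rw [show (⟨f q.out, hmemT q.out⟩ : (T : Type)) = ⟨f q'.out, hmemT q'.out⟩ from
          Subtype.ext heq]
        exact hrelhub q'.out
      exact Quotient.out_equiv_out.mp ((hrelhub q.out).trans h2.symm)
    calc nclass V T = Nat.card (Quotient (sensRel V T)) := rfl
      _ ≤ Nat.card (T : Type) := Nat.card_le_card_of_injective _ hinj
      _ = T.card := Nat.card_eq_finsetCard T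
  obtain ⟨v0, hv0⟩ := id hV
  have hS1 : 1 ≤ S.card := Finset.card_pos.mpr ⟨f ⟨v0, hv0⟩, hfS ⟨v0, hv0⟩⟩
  have hTcard : T.card ≤ S.card := Finset.card_le_card hTS
  obtain ⟨M, _, hcard, hconn⟩ := build V hV hcloud (nclass V T) T le_rfl hinv
  exact ⟨M, by omega, hconn⟩
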